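/- Let (t_i)_{i ≥ 0} be a probability distribution on the nonnegative integers (t_i ≥ 0, Σ_{i≥0} t_i = 1). Then its Shannon entropy satisfies H(t) = Σ_{i ≥ 0} t_i log₂(1/t_i) ≤ Σ_{i ≥ 1} i·t_i + 3, where terms with t_i = 0 are interpreted as 0. -/

import Mathlib

open scoped ENNReal

lemma key_term_bound (i : ℕ) (t : ℝ) (ht : 0 ≤ t) :
    t * Real.logb 2 (1 / t) ≤ (i : ℝ) * t + (1 / 2) ^ i / Real.log 2 := by
  have hlog2 : 0 < Real.log 2 := Real.log_pos (by norm_num)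
  rcases ht.eq_or_lt with h | h
  · rw [← h]
    simp
    positivity
  · have h1 : Real.log ((1 / 2 : ℝ) ^ i / t) ≤ (1 / 2) ^ i / t - 1 :=
      Real.log_le_sub_one_of_pos (by positivity)
    have h2 : t * Real.log ((1 / 2 : ℝ) ^ i / t) ≤ (1 / 2) ^ i - t := by
      have := mul_le_mul_of_nonneg_left h1 ht
      have ht' : t * ((1 / 2 : ℝ) ^ i / t - 1) = (1 / 2) ^ i - t := by
        field_simp
      linarith [ht', this]
    have hlogid : Real.log (1 / t) = Real.log ((1 / 2 : ℝ) ^ i / t) + i * Real.log 2 := by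
      rw [one_div, Real.log_inv, Real.log_div (by positivity) h.ne', Real.log_pow, one_div,
        Real.log_inv]
      ring
    have hmain : t * Real.log (1 / t) ≤ (1 / 2) ^ i + (i : ℝ) * t * Real.log 2 := by
      rw [hlogid]
      nlinarith [h2]
    rw [Real.logb, div_eq_mul_inv, ← mul_assoc]
    rw [← sub_nonneg]
    have : (i : ℝ) * t + (1 / 2) ^ i / Real.log 2 - t * Real.log (1 / t) * (Real.log 2)⁻¹ =
        ((1 / 2) ^ i + (i : ℝ) * t * Real.log 2 - t * Real.log (1 / t)) / Real.log 2 := by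
      field_simp
      ring
    rw [this]
    exact div_nonneg (by linarith) hlog2.le

theorem entropy_le_mean_add_three (t : ℕ → ℝ) (ht : ∀ i, 0 ≤ t i) (htsum : HasSum t 1) :
    ∑' i : ℕ, ENNReal.ofReal (t i * Real.logb 2 (1 / t i)) ≤
      (∑' i : ℕ, ENNReal.ofReal ((i : ℝ) * t i)) + 3 := by
  have hlog2 : 0 < Real.log 2 := Real.log_pos (by norm_num)
  have hstep : ∀ i : ℕ, ENNReal.ofReal (t i * Real.logb 2 (1 / t i)) ≤
      ENNReal.ofReal ((i : ℝ) * t i) + ENNReal.ofReal ((1 / 2) ^ i / Real.log 2) := fun i => by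
    rw [← ENNReal.ofReal_add (mul_nonneg (Nat.cast_nonneg i) (ht i)) (by positivity)]
    exact ENNReal.ofReal_le_ofReal (key_term_bound i (t i) (ht i))
  calc ∑' i : ℕ, ENNReal.ofReal (t i * Real.logb 2 (1 / t i))
      ≤ ∑' i : ℕ, (ENNReal.ofReal ((i : ℝ) * t i) + ENNReal.ofReal ((1 / 2) ^ i / Real.log 2)) :=
        ENNReal.tsum_le_tsum hstep
    _ = (∑' i : ℕ, ENNReal.ofReal ((i : ℝ) * t i)) +
        ∑' i : ℕ, ENNReal.ofReal ((1 / 2) ^ i / Real.log 2) := ENNReal.tsum_add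
    _ ≤ (∑' i : ℕ, ENNReal.ofReal ((i : ℝ) * t i)) + 3 := by
        gcongr
        have hsummable : Summable (fun i : ℕ => (1 / 2 : ℝ) ^ i / Real.log 2) :=
          summable_geometric_two.div_const _
        rw [← ENNReal.ofReal_tsum_of_nonneg (fun i => by positivity) hsummable]
        have : ∑' i : ℕ, (1 / 2 : ℝ) ^ i / Real.log 2 = 2 / Real.log 2 := by
          rw [tsum_div_const, tsum_geometric_two]
        rw [this]
        have h23 : (2 : ℝ) / Real.log 2 ≤ 3 := by
          rw [div_le_iff₀ hlog2]
          have := Real.log_two_gt_d9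
          linarith
        calc ENNReal.ofReal (2 / Real.log 2) ≤ ENNReal.ofReal 3 :=
              ENNReal.ofReal_le_ofReal h23
          _ = 3 := by norm_num
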